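/- Let T be a spanning hypertree of the complete 3-uniform hypergraph on {1,…,N} with hyperedges A_1,…,A_n, and let τ_S denote the permutation cyclically rotating the elements of a subset S in their natural order. Then the product τ_{A_1} ∘ τ_{A_2} ∘ ⋯ ∘ τ_{A_n} is a single cycle of length N. -/

import Mathlib

variable {α : Type*} [DecidableEq α]

/-- Two vertices are adjacent in a hypergraph with hyperedge set `E`
if they are distinct and lie in a common hyperedge. -/
def HypAdj (E : Finset (Finset α)) (u v : α) : Prop :=
  u ≠ v ∧ ∃ e ∈ E, u ∈ e ∧ v ∈ e

/-- A hypergraph with vertex set `V` and hyperedge set `E` is connected if any two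
vertices are joined by a path of adjacent vertices. -/
def HypConnected (V : Finset α) (E : Finset (Finset α)) : Prop :=
  ∀ u ∈ V, ∀ v ∈ V, Relation.ReflTransGen (HypAdj E) u v

/-- A hypergraph has a cycle if there is a cyclic alternating sequence
`v₁, A₁, v₂, A₂, …, v_ℓ, A_ℓ, v_{ℓ+1} = v₁` with `ℓ ≥ 2`, the hyperedges `Aᵢ ∈ E`
pairwise distinct, `vᵢ ≠ vᵢ₊₁`, and `vᵢ, vᵢ₊₁ ∈ Aᵢ` for all `i`. -/
def HypHasCycle (E : Finset (Finset α)) : Prop :=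
  ∃ (ℓ : ℕ) (v : Fin (ℓ + 1) → α) (A : Fin ℓ → Finset α),
    2 ≤ ℓ ∧ v (Fin.last ℓ) = v 0 ∧ Function.Injective A ∧
    ∀ i : Fin ℓ, A i ∈ E ∧ v i.castSucc ≠ v i.succ ∧ v i.castSucc ∈ A i ∧ v i.succ ∈ A i

/-- `(V, E)` is a hypertree: the hyperedges lie inside `V`, and the hypergraph
is connected and has no cycle. -/
def IsHypertree (V : Finset α) (E : Finset (Finset α)) : Prop :=
  (∀ e ∈ E, e ⊆ V) ∧ HypConnected V E ∧ ¬ HypHasCycle E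

/-- `E'` is (the hyperedge set of) a spanning hypertree of the hypergraph `(V, E)`. -/
def IsSpanningHypertree (V : Finset α) (E E' : Finset (Finset α)) : Prop :=
  E' ⊆ E ∧ IsHypertree V E'

/-- `rotPerm S` is the permutation that cyclically rotates the elements of the finite set
`S` in their natural order (each element of `S` is sent to the next larger one, the
largest to the smallest), fixing everything outside `S`. -/
def rotPerm {β : Type*} [DecidableEq β] [LinearOrder β] (S : Finset β) : Equiv.Perm β :=
  (S.sort (· ≤ ·)).formPerm

namespace TreeAux

variable {β : Type*} [DecidableEq β]

/-- Product of the transpositions determined by a list of pairs. -/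
def swapProd (T : List (β × β)) : Equiv.Perm β :=
  (T.map fun e => Equiv.swap e.1 e.2).prod

/-- Graph adjacency determined by a list of pairs. -/
def Adj (T : List (β × β)) (x y : β) : Prop :=
  x ≠ y ∧ ∃ d ∈ T, (x = d.1 ∨ x = d.2) ∧ (y = d.1 ∨ y = d.2)

@[simp] lemma swapProd_nil : swapProd ([] : List (β × β)) = 1 := rfl

@[simp] lemma swapProd_cons (e : β × β) (T : List (β × β)) :
    swapProd (e :: T) = Equiv.swap e.1 e.2 * swapProd T := by
  simp [swapProd]

@[simp] lemma swapProd_append (T1 T2 : List (β × β)) :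
    swapProd (T1 ++ T2) = swapProd T1 * swapProd T2 := by
  simp [swapProd]

lemma swapProd_fix {T : List (β × β)} {v : β}
    (h : ∀ e ∈ T, e.1 ≠ v ∧ e.2 ≠ v) : swapProd T v = v := by
  induction T with
  | nil => rfl
  | cons e T ih =>
    have he := h e (List.mem_cons_self)
    have : swapProd T v = v := ih fun d hd => h d (List.mem_cons_of_mem _ hd)
    simp [Equiv.Perm.mul_apply, this, Equiv.swap_apply_of_ne_of_ne (Ne.symm he.1) (Ne.symm he.2)]

lemma swapProd_mapsTo {T : List (β × β)} {V : Finset β}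
    (h : ∀ e ∈ T, e.1 ∈ V ∧ e.2 ∈ V) : ∀ z ∈ V, swapProd T z ∈ V := by
  induction T with
  | nil => intro z hz; simpa using hz
  | cons e T ih =>
    intro z hz
    have he := h e (List.mem_cons_self)
    have hz' : swapProd T z ∈ V := ih (fun d hd => h d (List.mem_cons_of_mem _ hd)) z hz
    simp only [swapProd_cons, Equiv.Perm.mul_apply]
    by_cases h1 : swapProd T z = e.1
    · simpa [h1] using he.2
    · by_cases h2 : swapProd T z = e.2
      · simpa [h2] using he.1
      · rwa [Equiv.swap_apply_of_ne_of_ne h1 h2]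

lemma extend_cycle {β : Type*} [DecidableEq β] [Fintype β] {σ : Equiv.Perm β} {v x : β}
    (h : σ.IsCycle) (hvs : v ∉ σ.support) (hx : x ∈ σ.support) :
    (Equiv.swap v x * σ).IsCycle ∧ (Equiv.swap v x * σ).support = insert v σ.support := by
  have hv : σ v = v := Equiv.Perm.notMem_support.mp hvs
  have hvx : v ≠ x := fun hvx => hvs (hvx ▸ hx)
  set τ := Equiv.swap v x * σ with hτ
  have hτv : τ v = x := by simp [hτ, hv]
  have hkey : ∀ y, σ y ≠ y → τ y = if σ y = x then v else σ y := by
    intro y hy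
    have hyv : y ≠ v := fun hyv => hy (by rw [hyv, hv])
    have hσyv : σ y ≠ v := fun hc => hyv (by simpa [hv] using σ.injective (hc.trans hv.symm))
    by_cases hc : σ y = x
    · simp [hτ, hc]
    · simp [hτ, hc, Equiv.swap_apply_of_ne_of_ne hσyv hc]
  have hsupp : τ.support = insert v σ.support := by
    ext y
    simp only [Equiv.Perm.mem_support, Finset.mem_insert]
    constructor
    · intro hy
      by_contra hcon
      push_neg at hcon
      obtain ⟨hyv, hyfix⟩ := hcon
      have hyx : y ≠ x := fun hc => (Equiv.Perm.mem_support.mp hx) (hc ▸ hyfix)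
      apply hy
      simp [hτ, hyfix, Equiv.swap_apply_of_ne_of_ne hyv hyx]
    · rintro (rfl | hy)
      · rw [hτv]; exact Ne.symm hvx
      · rw [hkey y hy]
        by_cases hc : σ y = x
        · simp only [hc, if_pos]
          exact fun hc2 => (hc2 ▸ hy) (hc2 ▸ hv)
        · simpa [hc] using hy
  refine ⟨⟨v, by rw [hτv]; exact Ne.symm hvx, ?_⟩, hsupp⟩
  -- every moved point is in the same τ-cycle as v
  have hstep : ∀ z, σ z ≠ z → τ.SameCycle z (σ z) := by
    intro z hz
    by_cases hc : σ z = x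
    · have h1 : τ z = v := by rw [hkey z hz, if_pos hc]
      refine ⟨2, ?_⟩
      have : τ (τ z) = σ z := by rw [h1, hτv, hc]
      simpa [zpow_two, sq, Equiv.Perm.mul_apply] using this
    · refine ⟨1, ?_⟩
      simpa [zpow_one] using (hkey z hz).trans (if_neg hc)
  have hxmem := Equiv.Perm.mem_support.mp hx
  have hpow : ∀ k : ℕ, τ.SameCycle x ((σ ^ k) x) := by
    intro k
    induction k with
    | zero => simp [Equiv.Perm.SameCycle.refl]
    | succ k ih =>
      have hz : (σ ^ k) x ∈ σ.support := Equiv.Perm.pow_apply_mem_support.mpr hx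
      have := hstep _ (Equiv.Perm.mem_support.mp hz)
      have hs : (σ ^ (k + 1)) x = σ ((σ ^ k) x) := by
        rw [pow_succ']; rfl
      rw [hs]
      exact ih.trans this
  intro y hy
  have hy' : y ∈ τ.support := Equiv.Perm.mem_support.mpr hy
  rw [hsupp, Finset.mem_insert] at hy'
  rcases hy' with rfl | hy'
  · exact Equiv.Perm.SameCycle.refl _ _
  · have hvxsc : τ.SameCycle v x := ⟨1, by simpa [zpow_one] using hτv⟩
    obtain ⟨k, hk⟩ := h.exists_pow_eq hxmem (Equiv.Perm.mem_support.mp hy')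
    exact hvxsc.trans (hk ▸ hpow k)

lemma flatMap_endpoints_length (T : List (β × β)) :
    (T.flatMap fun e => [e.1, e.2]).length = 2 * T.length := by
  induction T with
  | nil => rfl
  | cons e T ih => simp [List.flatMap_cons, ih]; ring

/-- Main lemma: the product of the transpositions of a connected spanning graph with
`|V| - 1` edges is a cycle with support `V`. -/
lemma tree_swap_cycle {β : Type*} [DecidableEq β] [Fintype β] :
    ∀ (k : ℕ) (T : List (β × β)) (V : Finset β), T.length = k → 1 ≤ k →
      V.card = k + 1 →
      (∀ e ∈ T, e.1 ≠ e.2 ∧ e.1 ∈ V ∧ e.2 ∈ V) →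
      (∀ u ∈ V, ∀ w ∈ V, Relation.ReflTransGen (Adj T) u w) →
      (swapProd T).IsCycle ∧ (swapProd T).support = V := by
  intro k
  induction k using Nat.strong_induction_on with
  | _ k IH =>
  intro T V hlen hk hcard hend hconn
  rcases eq_or_lt_of_le hk with hk1 | hk2
  · -- base case : one edge
    obtain ⟨d, rfl⟩ : ∃ d, T = [d] := List.length_eq_one_iff.mp (hlen.trans hk1.symm)
    obtain ⟨hne, h1, h2⟩ := hend d (List.mem_cons_self)
    have hVeq : V = {d.1, d.2} := by
      refine (Finset.eq_of_subset_of_card_le ?_ ?_).symm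
      · intro z hz
        rcases Finset.mem_insert.mp hz with rfl | hz
        · exact h1
        · rcases Finset.mem_singleton.mp hz with rfl; exact h2
      · rw [hcard, ← hk1, Finset.card_insert_of_notMem (by simpa using hne),
          Finset.card_singleton]
    have hsp : swapProd [d] = Equiv.swap d.1 d.2 := by simp
    rw [hsp]
    exact ⟨Equiv.Perm.isCycle_swap hne, by rw [Equiv.Perm.support_swap hne, hVeq]⟩
  · -- inductive step : k ≥ 2
    -- endpoint multiset
    set Nl : List β := T.flatMap fun e => [e.1, e.2] with hNl
    have hNlen : Nl.length = 2 * k := by rw [hNl, flatMap_endpoints_length, hlen]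
    have hdegpos : ∀ v ∈ V, v ∈ Nl := by
      intro v hv
      obtain ⟨u, hu, huv⟩ := Finset.exists_mem_ne (by omega : 1 < V.card) v
      have hpath := hconn v hv u hu
      rcases hpath.cases_head with rfl | ⟨c, hadj, -⟩
      · exact absurd rfl huv
      · obtain ⟨-, d, hd, hvd, -⟩ := hadj
        refine List.mem_flatMap.mpr ⟨d, hd, ?_⟩
        rcases hvd with rfl | rfl <;> simp
    -- find a leaf vertex
    have hleaf : ∃ v ∈ V, Nl.count v = 1 := by
      by_contra hcon
      push_neg at hcon
      have h2le : ∀ v ∈ V, 2 ≤ Nl.count v := by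
        intro v hv
        have h1 : 1 ≤ Nl.count v := List.count_pos_iff.mpr (hdegpos v hv)
        have := hcon v hv
        omega
      have hsum : ∑ v ∈ V, Nl.count v ≤ Nl.length := by
        have hsub : V ⊆ (Nl : Multiset β).toFinset := by
          intro v hv; exact Multiset.mem_toFinset.mpr (hdegpos v hv)
        calc ∑ v ∈ V, Nl.count v = ∑ v ∈ V, (Nl : Multiset β).count v := by
              simp [Multiset.coe_count]
          _ ≤ ∑ v ∈ (Nl : Multiset β).toFinset, (Nl : Multiset β).count v :=
              Finset.sum_le_sum_of_subset hsub
          _ = Multiset.card (Nl : Multiset β) := Multiset.toFinset_sum_count_eq _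
          _ = Nl.length := by simp
      have hge : 2 * V.card ≤ ∑ v ∈ V, Nl.count v := by
        calc 2 * V.card = ∑ _v ∈ V, 2 := by rw [Finset.sum_const, smul_eq_mul, mul_comm]
          _ ≤ ∑ v ∈ V, Nl.count v := Finset.sum_le_sum h2le
      rw [hcard] at hge
      omega
    obtain ⟨v, hvV, hvcount⟩ := hleaf
    -- the unique edge at v
    obtain ⟨d, hdT, hvd⟩ := List.mem_flatMap.mp (hdegpos v hvV)
    obtain ⟨T1, T2, rfl⟩ := List.append_of_mem hdT
    obtain ⟨hdne, hd1V, hd2V⟩ := hend d hdT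
    -- normalize : w is the other endpoint
    have hvd' : v = d.1 ∨ v = d.2 := by simpa using hvd
    obtain ⟨w, hswap, hiff, hwv, hwV⟩ :
        ∃ w, Equiv.swap d.1 d.2 = Equiv.swap v w ∧
          (∀ x : β, (x = d.1 ∨ x = d.2) ↔ (x = v ∨ x = w)) ∧ w ≠ v ∧ w ∈ V := by
      rcases hvd' with h1 | h1
      · rw [h1]; exact ⟨d.2, rfl, fun x => Iff.rfl, Ne.symm hdne, hd2V⟩
      · rw [h1]; exact ⟨d.1, Equiv.swap_comm _ _, fun x => or_comm, hdne, hd1V⟩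
    -- count of v in the flatMap over T1, T2 is zero
    have hd_count : ([d.1, d.2].count v) = 1 := by
      rcases hvd' with h1 | h1 <;> rw [h1] <;>
        simp [List.count_cons, hdne, Ne.symm hdne]
    have hsplit : Nl = (T1.flatMap fun e => [e.1, e.2]) ++ ([d.1, d.2] ++
        (T2.flatMap fun e => [e.1, e.2])) := by
      rw [hNl, List.flatMap_append, List.flatMap_cons]
    have hcount0 : (T1.flatMap fun e => [e.1, e.2]).count v = 0 ∧
        (T2.flatMap fun e => [e.1, e.2]).count v = 0 := by
      have := hvcount
      rw [hsplit, List.count_append, List.count_append, hd_count] at this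
      omega
    have hT1v : ∀ e ∈ T1, e.1 ≠ v ∧ e.2 ≠ v := by
      intro e he
      have hnm := List.count_eq_zero.mp hcount0.1
      constructor <;> · rintro rfl; exact hnm (List.mem_flatMap.mpr ⟨e, he, by simp⟩)
    have hT2v : ∀ e ∈ T2, e.1 ≠ v ∧ e.2 ≠ v := by
      intro e he
      have hnm := List.count_eq_zero.mp hcount0.2
      constructor <;> · rintro rfl; exact hnm (List.mem_flatMap.mpr ⟨e, he, by simp⟩)
    -- the reduced tree
    set T' : List (β × β) := T1 ++ T2 with hT'
    set V' : Finset β := V.erase v with hV'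
    have hT'v : ∀ e ∈ T', e.1 ≠ v ∧ e.2 ≠ v := by
      intro e he
      rcases List.mem_append.mp he with he | he
      · exact hT1v e he
      · exact hT2v e he
    have hT'len : T'.length = k - 1 := by
      have : T1.length + (T2.length + 1) = k := by simpa using hlen
      simp only [hT', List.length_append]; omega
    have hend' : ∀ e ∈ T', e.1 ≠ e.2 ∧ e.1 ∈ V' ∧ e.2 ∈ V' := by
      intro e he
      have heT : e ∈ T1 ++ d :: T2 := by
        rcases List.mem_append.mp he with he | he
        · exact List.mem_append.mpr (Or.inl he)
        · exact List.mem_append.mpr (Or.inr (List.mem_cons_of_mem _ he))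
      obtain ⟨h1, h2, h3⟩ := hend e heT
      exact ⟨h1, Finset.mem_erase.mpr ⟨(hT'v e he).1, h2⟩,
        Finset.mem_erase.mpr ⟨(hT'v e he).2, h3⟩⟩
    -- connectivity of the reduced graph
    have hstep' : ∀ a b, Adj (T1 ++ d :: T2) a b →
        Relation.ReflTransGen (Adj T') (if a = v then w else a) (if b = v then w else b) := by
      intro a b ⟨hab, d', hd', ha, hb⟩
      rcases List.mem_append.mp hd' with hd'1 | hd'2
      · have h1 := (hT1v d' hd'1)
        have hav : a ≠ v := by rcases ha with rfl | rfl; exacts [h1.1, h1.2]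
        have hbv : b ≠ v := by rcases hb with rfl | rfl; exacts [h1.1, h1.2]
        rw [if_neg hav, if_neg hbv]
        exact Relation.ReflTransGen.single ⟨hab, d', List.mem_append.mpr (Or.inl hd'1), ha, hb⟩
      · rcases List.mem_cons.mp hd'2 with rfl | hd'3
        · -- the leaf edge : both endpoints in {v, w}
          have ha' := (hiff a).mp ha
          have hb' := (hiff b).mp hb
          have hval : ∀ c, (c = v ∨ c = w) → (if c = v then w else c) = w := by
            rintro c (rfl | rfl)
            · rw [if_pos rfl]
            · rw [if_neg hwv]
          rw [hval a ha', hval b hb']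
        · have h1 := (hT2v d' hd'3)
          have hav : a ≠ v := by rcases ha with rfl | rfl; exacts [h1.1, h1.2]
          have hbv : b ≠ v := by rcases hb with rfl | rfl; exacts [h1.1, h1.2]
          rw [if_neg hav, if_neg hbv]
          exact Relation.ReflTransGen.single
            ⟨hab, d', List.mem_append.mpr (Or.inr hd'3), ha, hb⟩
    have hconn' : ∀ u ∈ V', ∀ u' ∈ V', Relation.ReflTransGen (Adj T') u u' := by
      intro u hu u' hu'
      have huv := (Finset.mem_erase.mp hu).1
      have hu'v := (Finset.mem_erase.mp hu').1
      have hpath := hconn u (Finset.mem_erase.mp hu).2 u' (Finset.mem_erase.mp hu').2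
      have hlift : ∀ a b, Relation.ReflTransGen (Adj (T1 ++ d :: T2)) a b →
          Relation.ReflTransGen (Adj T') (if a = v then w else a) (if b = v then w else b) := by
        intro a b hab
        induction hab with
        | refl => exact Relation.ReflTransGen.refl
        | tail _ hstep ih => exact ih.trans (hstep' _ _ hstep)
      have := hlift u u' hpath
      rwa [if_neg huv, if_neg hu'v] at this
    have hVcard' : V'.card = (k - 1) + 1 := by
      rw [hV', Finset.card_erase_of_mem hvV, hcard]; omega
    obtain ⟨hcyc', hsupp'⟩ := IH (k - 1) (by omega) T' V' hT'len (by omega) hVcard' hend' hconn'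
    -- algebra : swapProd T = swap v x * swapProd T'
    set P1 := swapProd T1 with hP1
    have hP1v : P1 v = v := swapProd_fix hT1v
    set x := P1 w with hx
    have hxV : x ∈ V := swapProd_mapsTo (fun e he => ((hend e
      (List.mem_append.mpr (Or.inl he))).2)) w hwV
    have hxv : x ≠ v := by
      rw [hx]
      intro hc
      exact hwv (P1.injective (hc.trans hP1v.symm))
    have halg : swapProd (T1 ++ d :: T2) = Equiv.swap v x * swapProd T' := by
      rw [hT', swapProd_append, swapProd_append, swapProd_cons, hswap]
      rw [← mul_assoc, ← mul_assoc, ← hP1, Equiv.mul_swap_eq_swap_mul, hP1v, ← hx]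
    have hxsupp : x ∈ (swapProd T').support := by
      rw [hsupp']; exact Finset.mem_erase.mpr ⟨hxv, hxV⟩
    have hvsupp : v ∉ (swapProd T').support := by
      rw [hsupp']; exact fun hc => (Finset.mem_erase.mp hc).1 rfl
    obtain ⟨hc, hs⟩ := extend_cycle hcyc' hvsupp hxsupp
    rw [halg]
    refine ⟨hc, ?_⟩
    rw [hs, hsupp', hV', Finset.insert_erase hvV]

end TreeAux

section Glue

variable {γ : Type*} [DecidableEq γ] [LinearOrder γ]

lemma formPerm_eq_swapProd (l : List γ) :
    List.formPerm l = TreeAux.swapProd (l.zip l.tail) := by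
  induction l with
  | nil => rfl
  | cons a t ih =>
    cases t with
    | nil => rfl
    | cons b t' =>
      rw [List.formPerm_cons_cons]
      simp only [List.tail_cons, List.zip_cons_cons, TreeAux.swapProd_cons]
      rw [ih]
      rfl

/-- The consecutive pairs of the sorted list of a finset. -/
def pairsOf (A : Finset γ) : List (γ × γ) :=
  (A.sort (· ≤ ·)).zip (A.sort (· ≤ ·)).tail

lemma rotPerm_eq_swapProd (A : Finset γ) : rotPerm A = TreeAux.swapProd (pairsOf A) :=
  formPerm_eq_swapProd _

lemma prod_map_rotPerm (L : List (Finset γ)) :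
    (L.map rotPerm).prod = TreeAux.swapProd (L.flatMap pairsOf) := by
  induction L with
  | nil => rfl
  | cons A L ih =>
    rw [List.map_cons, List.prod_cons, List.flatMap_cons, TreeAux.swapProd_append, ih,
      rotPerm_eq_swapProd]

lemma exists_sort3 {A : Finset γ} (h : A.card = 3) :
    ∃ a b c, A.sort (· ≤ ·) = [a, b, c] :=
  List.length_eq_three.mp (by rw [Finset.length_sort, h])

end Glue

/-- If the hyperedges `A₁, …, Aₙ` (listed in any order by `L`) form a spanning hypertree
of the complete 3-uniform hypergraph on `Fin (2n+1)`, then the product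
`τ_{A₁} ∘ ⋯ ∘ τ_{Aₙ}` of the cyclic rotations is a single cycle of length `N = 2n+1`. -/
theorem prod_rotPerm_isCycle
    (n : ℕ) (hn : 1 ≤ n) (E' : Finset (Finset (Fin (2 * n + 1))))
    (huniform : ∀ A ∈ E', A.card = 3)
    (htree : IsHypertree Finset.univ E') (hcard : E'.card = n)
    (L : List (Finset (Fin (2 * n + 1)))) (hnodup : L.Nodup) (hL : L.toFinset = E') :
    (L.map rotPerm).prod.IsCycle ∧ (L.map rotPerm).prod.support = Finset.univ := by
  classical
  set T : List (Fin (2 * n + 1) × Fin (2 * n + 1)) := L.flatMap pairsOf with hT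
  -- per-edge structure
  have hedge : ∀ A ∈ L, ∃ a b c : Fin (2 * n + 1),
      A.sort (· ≤ ·) = [a, b, c] ∧ a ≠ b ∧ a ≠ c ∧ b ≠ c ∧
      pairsOf A = [(a, b), (b, c)] := by
    intro A hA
    have hA3 : A.card = 3 := huniform A (hL ▸ List.mem_toFinset.mpr hA)
    obtain ⟨a, b, c, hsort⟩ := exists_sort3 hA3
    have hnd : ([a, b, c] : List (Fin (2 * n + 1))).Nodup := hsort ▸ A.sort_nodup (· ≤ ·)
    simp only [List.nodup_cons, List.mem_cons, List.mem_singleton, List.not_mem_nil,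
      or_false, not_or, List.nodup_nil, and_true] at hnd
    refine ⟨a, b, c, hsort, hnd.1.1, hnd.1.2, hnd.2.1, ?_⟩
    rw [pairsOf, hsort]
    rfl
  have hLlen : L.length = n := by
    rw [← List.toFinset_card_of_nodup hnodup, hL, hcard]
  have hTlen : T.length = 2 * n := by
    rw [hT, List.length_flatMap]
    have : L.map (fun a => (pairsOf a).length) = L.map fun _ => 2 := by
      refine List.map_congr_left fun A hA => ?_
      obtain ⟨a, b, c, -, -, -, -, hpairs⟩ := hedge A hA
      simp only [Function.comp_apply, hpairs]
      rfl
    rw [this, List.map_const', List.sum_replicate, smul_eq_mul, hLlen, Nat.mul_comm]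
  have hend : ∀ e ∈ T, e.1 ≠ e.2 ∧ e.1 ∈ (Finset.univ : Finset (Fin (2 * n + 1))) ∧
      e.2 ∈ (Finset.univ : Finset (Fin (2 * n + 1))) := by
    intro e he
    obtain ⟨A, hA, heA⟩ := List.mem_flatMap.mp he
    obtain ⟨a, b, c, -, hab, -, hbc, hpairs⟩ := hedge A hA
    rw [hpairs] at heA
    rcases List.mem_cons.mp heA with rfl | heA
    · exact ⟨hab, Finset.mem_univ _, Finset.mem_univ _⟩
    · rcases List.mem_singleton.mp heA with rfl
      exact ⟨hbc, Finset.mem_univ _, Finset.mem_univ _⟩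
  have hsymm : ∀ x y, TreeAux.Adj T x y → TreeAux.Adj T y x := by
    rintro x y ⟨h1, d, hd, hx, hy⟩
    exact ⟨h1.symm, d, hd, hy, hx⟩
  have hlift : ∀ a b, HypAdj E' a b → Relation.ReflTransGen (TreeAux.Adj T) a b := by
    rintro u u' ⟨huu', A, hAE, huA, hu'A⟩
    have hAL : A ∈ L := List.mem_toFinset.mp (hL ▸ hAE)
    obtain ⟨a, b, c, hsort, hab, hac, hbc, hpairs⟩ := hedge A hAL
    have hmemab : ((a, b) : Fin (2 * n + 1) × Fin (2 * n + 1)) ∈ T :=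
      List.mem_flatMap.mpr ⟨A, hAL, by rw [hpairs]; simp⟩
    have hmembc : ((b, c) : Fin (2 * n + 1) × Fin (2 * n + 1)) ∈ T :=
      List.mem_flatMap.mpr ⟨A, hAL, by rw [hpairs]; simp⟩
    have adjab : TreeAux.Adj T a b := ⟨hab, (a, b), hmemab, Or.inl rfl, Or.inr rfl⟩
    have adjbc : TreeAux.Adj T b c := ⟨hbc, (b, c), hmembc, Or.inl rfl, Or.inr rfl⟩
    have hmem : ∀ z, z ∈ A → z = a ∨ z = b ∨ z = c := by
      intro z hz
      have : z ∈ A.sort (· ≤ ·) := (Finset.mem_sort _).mpr hz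
      rw [hsort] at this
      simpa using this
    rcases hmem u huA with rfl | rfl | rfl <;> rcases hmem u' hu'A with rfl | rfl | rfl
    · exact absurd rfl huu'
    · exact Relation.ReflTransGen.single adjab
    · exact (Relation.ReflTransGen.single adjab).trans (Relation.ReflTransGen.single adjbc)
    · exact Relation.ReflTransGen.single (hsymm _ _ adjab)
    · exact absurd rfl huu'
    · exact Relation.ReflTransGen.single adjbc
    · exact (Relation.ReflTransGen.single (hsymm _ _ adjbc)).trans
        (Relation.ReflTransGen.single (hsymm _ _ adjab))
    · exact Relation.ReflTransGen.single (hsymm _ _ adjbc)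
    · exact absurd rfl huu'
  have hconnT : ∀ u ∈ (Finset.univ : Finset (Fin (2 * n + 1))), ∀ w ∈ Finset.univ,
      Relation.ReflTransGen (TreeAux.Adj T) u w := by
    intro u _ w _
    have hgen : ∀ a b : Fin (2 * n + 1), Relation.ReflTransGen (HypAdj E') a b →
        Relation.ReflTransGen (TreeAux.Adj T) a b := by
      intro a b h
      induction h with
      | refl => exact Relation.ReflTransGen.refl
      | tail _ hstep ih => exact ih.trans (hlift _ _ hstep)
    exact hgen u w (htree.2.1 u (Finset.mem_univ u) w (Finset.mem_univ w))
  have hcardV : (Finset.univ : Finset (Fin (2 * n + 1))).card = 2 * n + 1 := by simp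
  obtain ⟨h1, h2⟩ := TreeAux.tree_swap_cycle (2 * n) T Finset.univ hTlen (by omega) hcardV
    hend hconnT
  rw [prod_map_rotPerm]
  exact ⟨h1, h2⟩
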